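/- Let Ω be a bounded domain in ℂ and let F be holomorphic on Ω, continuous on the closure, with derivative f = F'. If |z|² = F(z) + conj(F(z)) for all z on the boundary ∂Ω, then conj(z) - f(z) is orthogonal in L²(Ω, area measure) to every function g holomorphic on a neighborhood of the closure of Ω; i.e., ∫_Ω (conj(z) - f(z)) · conj(g(z)) dA(z) = 0. -/

import Mathlib

open MeasureTheory Complex

section AuxiliaryStokes
open Set

lemma oneDim_integral_deriv_zero (U : Set ℝ) (hU : IsOpen U) (hb : Bornology.IsBounded U)
    (ψ h : ℝ → ℂ) (hc : ContinuousOn ψ (closure U)) (h0 : ∀ x ∈ frontier U, ψ x = 0)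
    (hd : ∀ x ∈ U, HasDerivAt ψ (h x) x) (hint : IntegrableOn h U) :
    ∫ x in U, h x = 0 := by
  obtain ⟨C, hC0, hC⟩ := hb.subset_ball_lt 0 0
  have hmem : ∀ x ∈ U, -C < x ∧ x < C := by
    intro x hx
    have := hC hx
    rw [Real.ball_eq_Ioo] at this
    simpa using this
  set A : ℝ → ℝ := fun x => sSup (Uᶜ ∩ Iic x) with hA
  set B : ℝ → ℝ := fun x => sInf (Uᶜ ∩ Ici x) with hB
  -- basic facts about A and B for x ∈ U
  have hAfacts : ∀ x ∈ U, A x ∈ Uᶜ ∧ A x < x := by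
    intro x hx
    have hne : (Uᶜ ∩ Iic x).Nonempty := ⟨-C, fun hmm => absurd (hmem _ hmm).1 (lt_irrefl _), le_of_lt (hmem x hx).1⟩
    have hbdd : BddAbove (Uᶜ ∩ Iic x) := ⟨x, fun y hy => hy.2⟩
    have hclosed : IsClosed (Uᶜ ∩ Iic x) := (hU.isClosed_compl).inter isClosed_Iic
    have hmem' : A x ∈ Uᶜ ∩ Iic x := hclosed.csSup_mem hne hbdd
    refine ⟨hmem'.1, lt_of_le_of_ne hmem'.2 ?_⟩
    intro hEq
    rw [hEq] at hmem'; exact hmem'.1 hx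
  have hBfacts : ∀ x ∈ U, B x ∈ Uᶜ ∧ x < B x := by
    intro x hx
    have hne : (Uᶜ ∩ Ici x).Nonempty := ⟨C, fun hmm => absurd (hmem _ hmm).2 (lt_irrefl _), le_of_lt (hmem x hx).2⟩
    have hbdd : BddBelow (Uᶜ ∩ Ici x) := ⟨x, fun y hy => hy.2⟩
    have hclosed : IsClosed (Uᶜ ∩ Ici x) := (hU.isClosed_compl).inter isClosed_Ici
    have hmem' : B x ∈ Uᶜ ∩ Ici x := hclosed.csInf_mem hne hbdd
    refine ⟨hmem'.1, lt_of_le_of_ne hmem'.2 ?_⟩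
    intro hEq
    rw [← hEq] at hmem'; exact hmem'.1 hx
  have hsub : ∀ x ∈ U, Ioo (A x) (B x) ⊆ U := by
    intro x hx y hy
    by_contra hyU
    rcases le_or_gt y x with hle | hlt
    · have : y ≤ A x := le_csSup ⟨x, fun z hz => hz.2⟩ ⟨hyU, hle⟩
      exact absurd hy.1 (not_lt.2 this)
    · have : B x ≤ y := csInf_le ⟨x, fun z hz => hz.2⟩ ⟨hyU, le_of_lt hlt⟩
      exact absurd hy.2 (not_lt.2 this)
  have hxmem : ∀ x ∈ U, x ∈ Ioo (A x) (B x) := fun x hx => ⟨(hAfacts x hx).2, (hBfacts x hx).2⟩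
  have hfrontier : ∀ x ∈ U, A x ∈ frontier U ∧ B x ∈ frontier U := by
    intro x hx
    have hAB : A x < B x := lt_trans (hAfacts x hx).2 (hBfacts x hx).2
    have hclos : Icc (A x) (B x) ⊆ closure U := by
      rw [← closure_Ioo (ne_of_lt hAB)]
      exact closure_mono (hsub x hx)
    rw [hU.frontier_eq]
    exact ⟨⟨hclos ⟨le_refl _, le_of_lt hAB⟩, (hAfacts x hx).1⟩,
      ⟨hclos ⟨le_of_lt hAB, le_refl _⟩, (hBfacts x hx).1⟩⟩
  -- intervals are equal or disjoint
  have hkey : ∀ x ∈ U, ∀ x' ∈ U, ∀ w, w ∈ Ioo (A x) (B x) → w ∈ Ioo (A x') (B x') →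
      A x = A x' ∧ B x = B x' := by
    intro x hx x' hx' w hw hw'
    have hord : ∀ y ∈ U, ∀ y' ∈ U, w ∈ Ioo (A y) (B y) → w ∈ Ioo (A y') (B y') → A y' ≤ A y := by
      intro y hy y' hy' hwy hwy'
      by_contra hlt
      push_neg at hlt
      exact (hAfacts y' hy').1 (hsub y hy ⟨hlt, lt_trans hwy'.1 hwy.2⟩)
    have hord2 : ∀ y ∈ U, ∀ y' ∈ U, w ∈ Ioo (A y) (B y) → w ∈ Ioo (A y') (B y') → B y ≤ B y' := by
      intro y hy y' hy' hwy hwy' 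
      by_contra hlt
      push_neg at hlt
      exact (hBfacts y' hy').1 (hsub y hy ⟨lt_trans hwy.1 hwy'.2, hlt⟩)
    exact ⟨le_antisymm (hord x' hx' x hx hw' hw) (hord x hx x' hx' hw hw'),
      le_antisymm (hord2 x hx x' hx' hw hw') (hord2 x' hx' x hx hw' hw)⟩
  -- countable family of representative intervals
  set P : Set (ℝ × ℝ) := (fun q : ℚ => (A (q : ℝ), B (q : ℝ))) '' {q : ℚ | (q : ℝ) ∈ U} with hP
  have hPc : P.Countable := (Set.to_countable _).image _
  have := hPc.to_subtype
  set s : ↥P → Set ℝ := fun p => Ioo p.1.1 p.1.2 with hs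
  have hsU : ∀ p : ↥P, s p ⊆ U := by
    rintro ⟨p, q, hq, rfl⟩
    exact hsub _ hq
  have hUnion : (⋃ p, s p) = U := by
    apply Set.Subset.antisymm (Set.iUnion_subset hsU)
    intro x hx
    obtain ⟨q, hq1, hq2⟩ := exists_rat_btwn (lt_trans (hAfacts x hx).2 (hBfacts x hx).2)
    have hq : (q : ℝ) ∈ Ioo (A x) (B x) := ⟨hq1, hq2⟩
    have hqU : (q : ℝ) ∈ U := hsub x hx hq
    have heq := hkey _ hqU x hx ((q : ℝ)) (hxmem _ hqU) hq
    refine Set.mem_iUnion.2 ⟨⟨(A q, B q), q, hqU, rfl⟩, ?_⟩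
    simp only [hs]
    rw [heq.1, heq.2]
    exact hxmem x hx
  have hmeas : ∀ p : ↥P, MeasurableSet (s p) := fun p => measurableSet_Ioo
  have hdisj : Pairwise (Function.onFun Disjoint s) := by
    rintro ⟨p, q, hq, rfl⟩ ⟨p', q', hq', rfl⟩ hne
    rw [Function.onFun, Set.disjoint_left]
    intro w hw hw'
    have := hkey _ hq _ hq' w hw hw'
    exact hne (Subtype.ext (Prod.ext this.1 this.2))
  have hint' : IntegrableOn h (⋃ p, s p) := by rw [hUnion]; exact hint
  rw [← hUnion, integral_iUnion hmeas hdisj hint']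
  -- each interval contributes zero
  have hzero : ∀ p : ↥P, ∫ x in s p, h x = 0 := by
    rintro ⟨p, q, hq, rfl⟩
    simp only [hs]
    have hAB : A q < B q := lt_trans (hAfacts _ hq).2 (hBfacts _ hq).2
    have hup : Ioo (A (q:ℝ)) (B (q:ℝ)) ⊆ U := hsub _ hq
    have hii : IntervalIntegrable h volume (A (q:ℝ)) (B (q:ℝ)) := by
      rw [intervalIntegrable_iff_integrableOn_Ioo_of_le (le_of_lt hAB)]
      exact hint.mono_set hup
    have hcont : ContinuousOn ψ (Icc (A (q:ℝ)) (B (q:ℝ))) := by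
      apply hc.mono
      rw [← closure_Ioo (ne_of_lt hAB)]
      exact closure_mono hup
    have hderiv : ∀ x ∈ Ioo (A (q:ℝ)) (B (q:ℝ)), HasDerivWithinAt ψ (h x) (Ioi x) x :=
      fun x hx => (hd x (hup hx)).hasDerivWithinAt
    have := intervalIntegral.integral_eq_sub_of_hasDeriv_right_of_le (le_of_lt hAB) hcont hderiv hii
    rw [intervalIntegral.integral_of_le (le_of_lt hAB), ← integral_Ioc_eq_integral_Ioo] at *
    rw [this, h0 _ (hfrontier _ hq).1, h0 _ (hfrontier _ hq).2, sub_zero]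
  simp only [hzero, tsum_zero]

lemma twoDim_x_integral_deriv_zero (S : Set (ℝ × ℝ)) (hS : IsOpen S)
    (hb : Bornology.IsBounded S) (ψ h : ℝ × ℝ → ℂ)
    (hc : ContinuousOn ψ (closure S)) (h0 : ∀ p ∈ frontier S, ψ p = 0)
    (hd : ∀ p ∈ S, HasDerivAt (fun x => ψ (x, p.2)) (h p) p.1)
    (hint : IntegrableOn h S) : ∫ p in S, h p = 0 := by
  obtain ⟨C, hC⟩ := hb.subset_closedBall 0
  have hind : Integrable (S.indicator h) := (integrable_indicator_iff hS.measurableSet).2 hint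
  rw [← integral_indicator hS.measurableSet]
  have hind' : Integrable (S.indicator h) ((volume : Measure ℝ).prod volume) := by
    rwa [← Measure.volume_eq_prod]
  rw [show (volume : Measure (ℝ × ℝ)) = (volume : Measure ℝ).prod volume from Measure.volume_eq_prod ℝ ℝ]
  rw [integral_prod_symm _ hind']
  have hzero : ∀ᵐ y : ℝ, ∫ x : ℝ, S.indicator h (x, y) = 0 := by
    filter_upwards [hind'.prod_left_ae] with y hy
    set Uy : Set ℝ := {x | (x, y) ∈ S} with hUy
    have hcont_sec : Continuous (fun x : ℝ => (x, y)) := continuous_id.prodMk continuous_const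
    have hUyopen : IsOpen Uy := hS.preimage hcont_sec
    have hindeq : (fun x : ℝ => S.indicator h (x, y)) = Uy.indicator (fun x => h (x, y)) := by
      funext x
      by_cases hx : (x, y) ∈ S
      · rw [Set.indicator_of_mem hx]
        exact (Set.indicator_of_mem hx _).symm
      · rw [Set.indicator_of_notMem hx]
        exact (Set.indicator_of_notMem hx _).symm
    have hclos : closure Uy ⊆ {x | (x, y) ∈ closure S} := by
      apply closure_minimal _ (isClosed_closure.preimage hcont_sec)
      exact fun x hx => subset_closure hx
    have hfront : ∀ x ∈ frontier Uy, (x, y) ∈ frontier S := by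
      intro x hx
      rw [hUyopen.frontier_eq] at hx
      rw [hS.frontier_eq]
      exact ⟨hclos hx.1, hx.2⟩
    have hbdd : Bornology.IsBounded Uy := by
      apply (Metric.isBounded_closedBall (x := (0:ℝ)) (r := C)).subset
      intro x hx
      have h1 : (x, y) ∈ Metric.closedBall (0 : ℝ × ℝ) C := hC hx
      rw [Metric.mem_closedBall] at h1 ⊢
      calc dist x 0 ≤ dist ((x, y) : ℝ × ℝ) (0, 0) := by
            rw [Prod.dist_eq]; exact le_max_left _ _
        _ ≤ C := by simpa [Prod.mk_zero_zero] using h1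
    rw [hindeq] at hy ⊢
    rw [integral_indicator hUyopen.measurableSet]
    apply oneDim_integral_deriv_zero Uy hUyopen hbdd (fun x => ψ (x, y)) (fun x => h (x, y))
    · exact hc.comp hcont_sec.continuousOn (fun x hx => hclos hx)
    · exact fun x hx => h0 _ (hfront x hx)
    · exact fun x hx => hd (x, y) hx
    · exact (integrable_indicator_iff hUyopen.measurableSet).1 hy
  calc ∫ y : ℝ, ∫ x : ℝ, S.indicator h (x, y) = ∫ y : ℝ, (0 : ℂ) := integral_congr_ae hzero
    _ = 0 := integral_zero _ _

lemma twoDim_y_integral_deriv_zero (S : Set (ℝ × ℝ)) (hS : IsOpen S)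
    (hb : Bornology.IsBounded S) (ψ h : ℝ × ℝ → ℂ)
    (hc : ContinuousOn ψ (closure S)) (h0 : ∀ p ∈ frontier S, ψ p = 0)
    (hd : ∀ p ∈ S, HasDerivAt (fun y => ψ (p.1, y)) (h p) p.2)
    (hint : IntegrableOn h S) : ∫ p in S, h p = 0 := by
  obtain ⟨C, hC⟩ := hb.subset_closedBall 0
  have hind : Integrable (S.indicator h) := (integrable_indicator_iff hS.measurableSet).2 hint
  rw [← integral_indicator hS.measurableSet]
  have hind' : Integrable (S.indicator h) ((volume : Measure ℝ).prod volume) := by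
    rwa [← Measure.volume_eq_prod ℝ ℝ]
  rw [show (volume : Measure (ℝ × ℝ)) = (volume : Measure ℝ).prod volume from Measure.volume_eq_prod ℝ ℝ]
  rw [integral_prod _ hind']
  have hzero : ∀ᵐ x : ℝ, ∫ y : ℝ, S.indicator h (x, y) = 0 := by
    filter_upwards [hind'.prod_right_ae] with x hx
    set Vx : Set ℝ := {y | (x, y) ∈ S} with hVx
    have hcont_sec : Continuous (fun y : ℝ => (x, y)) := continuous_const.prodMk continuous_id
    have hVxopen : IsOpen Vx := hS.preimage hcont_sec
    have hindeq : (fun y : ℝ => S.indicator h (x, y)) = Vx.indicator (fun y => h (x, y)) := by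
      funext y
      by_cases hy : (x, y) ∈ S
      · rw [Set.indicator_of_mem hy]
        exact (Set.indicator_of_mem hy _).symm
      · rw [Set.indicator_of_notMem hy]
        exact (Set.indicator_of_notMem hy _).symm
    have hclos : closure Vx ⊆ {y | (x, y) ∈ closure S} := by
      apply closure_minimal _ (isClosed_closure.preimage hcont_sec)
      exact fun y hy => subset_closure hy
    have hfront : ∀ y ∈ frontier Vx, (x, y) ∈ frontier S := by
      intro y hy
      rw [hVxopen.frontier_eq] at hy
      rw [hS.frontier_eq]
      exact ⟨hclos hy.1, hy.2⟩
    have hbdd : Bornology.IsBounded Vx := by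
      apply (Metric.isBounded_closedBall (x := (0:ℝ)) (r := C)).subset
      intro y hy
      have h1 : (x, y) ∈ Metric.closedBall (0 : ℝ × ℝ) C := hC hy
      rw [Metric.mem_closedBall] at h1 ⊢
      calc dist y 0 ≤ dist ((x, y) : ℝ × ℝ) (0, 0) := by
            rw [Prod.dist_eq]; exact le_max_right _ _
        _ ≤ C := by simpa [Prod.mk_zero_zero] using h1
    rw [hindeq] at hx ⊢
    rw [integral_indicator hVxopen.measurableSet]
    apply oneDim_integral_deriv_zero Vx hVxopen hbdd (fun y => ψ (x, y)) (fun y => h (x, y))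
    · exact hc.comp hcont_sec.continuousOn (fun y hy => hclos hy)
    · exact fun y hy => h0 _ (hfront y hy)
    · exact fun y hy => hd (x, y) hy
    · exact (integrable_indicator_iff hVxopen.measurableSet).1 hx
  calc ∫ x : ℝ, ∫ y : ℝ, S.indicator h (x, y) = ∫ x : ℝ, (0 : ℂ) := integral_congr_ae hzero
    _ = 0 := integral_zero _ _

lemma cplx_setup (Ω : Set ℂ) (hO : IsOpen Ω) (hb : Bornology.IsBounded Ω) (ψ h : ℂ → ℂ)
    (hc : ContinuousOn ψ (closure Ω)) (h0 : ∀ z ∈ frontier Ω, ψ z = 0)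
    (hint : IntegrableOn h Ω)
    (hd : ∀ z ∈ Ω, HasDerivAt (fun x : ℝ => ψ (↑x + ↑z.im * I)) (h z) z.re) :
    ∫ z in Ω, h z = 0 := by
  set f : ℝ × ℝ → ℂ := fun p => Complex.measurableEquivRealProd.symm p with hfdef
  have hf_eq : ∀ p : ℝ × ℝ, f p = ↑p.1 + ↑p.2 * I := by
    intro p
    simp [hfdef, Complex.mk_eq_add_mul_I]
  have hfcont : Continuous f := by
    have : f = fun p : ℝ × ℝ => (↑p.1 + ↑p.2 * I : ℂ) := funext hf_eq
    rw [this]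
    exact (continuous_ofReal.comp continuous_fst).add
      ((continuous_ofReal.comp continuous_snd).mul continuous_const)
  have hmp : MeasurePreserving f :=
    Complex.volume_preserving_equiv_real_prod.symm Complex.measurableEquivRealProd
  have hemb : MeasurableEmbedding f :=
    Complex.measurableEquivRealProd.symm.measurableEmbedding
  set S : Set (ℝ × ℝ) := f ⁻¹' Ω with hSdef
  have himg : f '' S = Ω := by
    rw [hSdef, Set.image_preimage_eq Ω (Complex.measurableEquivRealProd.symm.surjective)]
  have hSopen : IsOpen S := hO.preimage hfcont
  have hSb : Bornology.IsBounded S := by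
    obtain ⟨C, hC⟩ := hb.subset_closedBall 0
    apply (Metric.isBounded_closedBall (x := (0 : ℝ × ℝ)) (r := C)).subset
    intro p hp
    have h1 : ‖f p‖ ≤ C := by
      have := hC hp
      rw [Metric.mem_closedBall, Complex.dist_eq, sub_zero] at this
      exact this
    rw [Metric.mem_closedBall]
    have hre : (f p).re = p.1 := by rw [hf_eq]; simp
    have him : (f p).im = p.2 := by rw [hf_eq]; simp
    rw [Prod.dist_eq]
    apply max_le
    · simp only [Prod.fst_zero, Real.dist_eq, sub_zero]
      rw [← hre]
      exact le_trans (Complex.abs_re_le_norm _) h1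
    · simp only [Prod.snd_zero, Real.dist_eq, sub_zero]
      rw [← him]
      exact le_trans (Complex.abs_im_le_norm _) h1
  have hclosS : closure S ⊆ f ⁻¹' (closure Ω) :=
    closure_minimal (Set.preimage_mono subset_closure) (isClosed_closure.preimage hfcont)
  have hfrontS : ∀ p ∈ frontier S, f p ∈ frontier Ω := by
    intro p hp
    rw [hSopen.frontier_eq] at hp
    rw [hO.frontier_eq]
    exact ⟨hclosS hp.1, hp.2⟩
  have : ∫ z in Ω, h z = ∫ p in S, h (f p) := by
    rw [← himg]
    exact hmp.setIntegral_image_emb hemb h S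
  rw [this]
  apply twoDim_x_integral_deriv_zero S hSopen hSb (fun p => ψ (f p)) (fun p => h (f p))
  · exact hc.comp hfcont.continuousOn (fun p hp => hclosS hp)
  · exact fun p hp => h0 _ (hfrontS p hp)
  · intro p hp
    have hz : f p ∈ Ω := hp
    have := hd (f p) hz
    have hre : (f p).re = p.1 := by rw [hf_eq]; simp
    have him : (f p).im = p.2 := by rw [hf_eq]; simp
    rw [hre, him] at this
    convert this using 2 with x
    rw [hf_eq]
  · exact (hmp.integrableOn_comp_preimage hemb).2 hint

lemma cplx_setup_y (Ω : Set ℂ) (hO : IsOpen Ω) (hb : Bornology.IsBounded Ω) (ψ h : ℂ → ℂ)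
    (hc : ContinuousOn ψ (closure Ω)) (h0 : ∀ z ∈ frontier Ω, ψ z = 0)
    (hint : IntegrableOn h Ω)
    (hd : ∀ z ∈ Ω, HasDerivAt (fun y : ℝ => ψ (↑z.re + ↑y * I)) (h z) z.im) :
    ∫ z in Ω, h z = 0 := by
  set f : ℝ × ℝ → ℂ := fun p => Complex.measurableEquivRealProd.symm p with hfdef
  have hf_eq : ∀ p : ℝ × ℝ, f p = ↑p.1 + ↑p.2 * I := by
    intro p
    simp [hfdef, Complex.mk_eq_add_mul_I]
  have hfcont : Continuous f := by
    have : f = fun p : ℝ × ℝ => (↑p.1 + ↑p.2 * I : ℂ) := funext hf_eq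
    rw [this]
    exact (continuous_ofReal.comp continuous_fst).add
      ((continuous_ofReal.comp continuous_snd).mul continuous_const)
  have hmp : MeasurePreserving f :=
    Complex.volume_preserving_equiv_real_prod.symm Complex.measurableEquivRealProd
  have hemb : MeasurableEmbedding f :=
    Complex.measurableEquivRealProd.symm.measurableEmbedding
  set S : Set (ℝ × ℝ) := f ⁻¹' Ω with hSdef
  have himg : f '' S = Ω := by
    rw [hSdef, Set.image_preimage_eq Ω (Complex.measurableEquivRealProd.symm.surjective)]
  have hSopen : IsOpen S := hO.preimage hfcont
  have hSb : Bornology.IsBounded S := by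
    obtain ⟨C, hC⟩ := hb.subset_closedBall 0
    apply (Metric.isBounded_closedBall (x := (0 : ℝ × ℝ)) (r := C)).subset
    intro p hp
    have h1 : ‖f p‖ ≤ C := by
      have := hC hp
      rw [Metric.mem_closedBall, Complex.dist_eq, sub_zero] at this
      exact this
    rw [Metric.mem_closedBall]
    have hre : (f p).re = p.1 := by rw [hf_eq]; simp
    have him : (f p).im = p.2 := by rw [hf_eq]; simp
    rw [Prod.dist_eq]
    apply max_le
    · simp only [Prod.fst_zero, Real.dist_eq, sub_zero]
      rw [← hre]
      exact le_trans (Complex.abs_re_le_norm _) h1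
    · simp only [Prod.snd_zero, Real.dist_eq, sub_zero]
      rw [← him]
      exact le_trans (Complex.abs_im_le_norm _) h1
  have hclosS : closure S ⊆ f ⁻¹' (closure Ω) :=
    closure_minimal (Set.preimage_mono subset_closure) (isClosed_closure.preimage hfcont)
  have hfrontS : ∀ p ∈ frontier S, f p ∈ frontier Ω := by
    intro p hp
    rw [hSopen.frontier_eq] at hp
    rw [hO.frontier_eq]
    exact ⟨hclosS hp.1, hp.2⟩
  have : ∫ z in Ω, h z = ∫ p in S, h (f p) := by
    rw [← himg]
    exact hmp.setIntegral_image_emb hemb h S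
  rw [this]
  apply twoDim_y_integral_deriv_zero S hSopen hSb (fun p => ψ (f p)) (fun p => h (f p))
  · exact hc.comp hfcont.continuousOn (fun p hp => hclosS hp)
  · exact fun p hp => h0 _ (hfrontS p hp)
  · intro p hp
    have hz : f p ∈ Ω := hp
    have := hd (f p) hz
    have hre : (f p).re = p.1 := by rw [hf_eq]; simp
    have him : (f p).im = p.2 := by rw [hf_eq]; simp
    rw [hre, him] at this
    convert this using 2 with y
    rw [hf_eq]
  · exact (hmp.integrableOn_comp_preimage hemb).2 hint

end AuxiliaryStokes

lemma hasDerivAt_conj_comp {u : ℝ → ℂ} {u' : ℂ} {x : ℝ} (h : HasDerivAt u u' x) :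
    HasDerivAt (fun t => (starRingEnd ℂ) (u t)) ((starRingEnd ℂ) u') x := by
  exact h.star

/-- If `F` is holomorphic on a bounded domain `Ω`, continuous on the closure, with
derivative `f`, and `|z|² = F(z) + conj (F z)` on `∂Ω`, then `conj z - f z` is orthogonal
in `L²(Ω, dA)` to every function holomorphic on a neighborhood of the closure of `Ω`. -/
theorem best_approx_of_boundary_identity
    (Ω : Set ℂ) (hΩopen : IsOpen Ω) (hΩconn : IsConnected Ω)
    (hΩbdd : Bornology.IsBounded Ω)
    (F f : ℂ → ℂ)
    (hF : DifferentiableOn ℂ F Ω)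
    (hFc : ContinuousOn F (closure Ω))
    (hf : ∀ z ∈ Ω, HasDerivAt F (f z) z)
    (hbdry : ∀ z ∈ frontier Ω, (Complex.normSq z : ℂ) = F z + (starRingEnd ℂ) (F z)) :
    ∀ g : ℂ → ℂ, (∃ U : Set ℂ, IsOpen U ∧ closure Ω ⊆ U ∧ DifferentiableOn ℂ g U) →
      ∫ z in Ω, ((starRingEnd ℂ) z - f z) * (starRingEnd ℂ) (g z) = 0 := by
  rintro g ⟨U, hUopen, hUsub, hg⟩
  set φ : ℂ → ℂ := fun z => (normSq z : ℂ) - F z - (starRingEnd ℂ) (F z) with hφdef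
  set T : ℂ → ℂ := fun z => ((starRingEnd ℂ) z - f z) * (starRingEnd ℂ) (g z) with hTdef
  show ∫ z in Ω, T z = 0
  by_cases hTi : IntegrableOn T Ω
  swap
  · exact integral_undef hTi
  have hsubU : Ω ⊆ U := (subset_closure.trans hUsub)
  have hgc : ContinuousOn g U := hg.continuousOn
  have hganal : AnalyticOnNhd ℂ g U := hg.analyticOnNhd hUopen
  have hg'c : ContinuousOn (deriv g) U := hganal.deriv.continuousOn
  have hgdiff : ∀ z ∈ Ω, HasDerivAt g (deriv g z) z := fun z hz =>
    (hg.differentiableAt (hUopen.mem_nhds (hsubU hz))).hasDerivAt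
  have hK : IsCompact (closure Ω) := hΩbdd.isCompact_closure
  have hφc : ContinuousOn φ (closure Ω) := by
    refine ContinuousOn.sub (ContinuousOn.sub ?_ hFc) (continuous_star.comp_continuousOn hFc)
    exact (Complex.continuous_ofReal.comp Complex.continuous_normSq).continuousOn
  have hφ0 : ∀ z ∈ frontier Ω, φ z = 0 := by
    intro z hz
    rw [hφdef]
    dsimp only
    rw [hbdry z hz]
    ring
  set ψ : ℂ → ℂ := fun z => φ z * (starRingEnd ℂ) (g z) with hψdef
  have hgcclos : ContinuousOn (fun z => (starRingEnd ℂ) (g z)) (closure Ω) :=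
    continuous_star.comp_continuousOn (hgc.mono hUsub)
  have hg'cclos : ContinuousOn (fun z => (starRingEnd ℂ) (deriv g z)) (closure Ω) :=
    continuous_star.comp_continuousOn (hg'c.mono hUsub)
  have hψc : ContinuousOn ψ (closure Ω) := hφc.mul hgcclos
  have hψ0 : ∀ z ∈ frontier Ω, ψ z = 0 := by
    intro z hz
    rw [hψdef]
    dsimp only
    rw [hφ0 z hz, zero_mul]
  have hcont_int : ∀ u : ℂ → ℂ, ContinuousOn u (closure Ω) → IntegrableOn u Ω := fun u hu =>
    (hu.integrableOn_compact hK).mono_set subset_closure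
  -- measurability of f
  have aesm_f : AEStronglyMeasurable f (volume.restrict Ω) := by
    have h1 : ∀ᵐ z ∂(volume.restrict Ω), deriv F z = f z :=
      (ae_restrict_iff' hΩopen.measurableSet).2
        (Filter.Eventually.of_forall fun z hz => (hf z hz).deriv)
    exact (measurable_deriv F).aestronglyMeasurable.congr h1
  have aesm_g : AEStronglyMeasurable (fun z => (starRingEnd ℂ) (g z)) (volume.restrict Ω) :=
    (hgcclos.mono subset_closure).aestronglyMeasurable hΩopen.measurableSet
  set P1 : ℂ → ℂ := fun z => 2*(z.re:ℂ) * (starRingEnd ℂ) (g z)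
    + φ z * (starRingEnd ℂ) (deriv g z) with hP1
  set P2 : ℂ → ℂ := fun z => -((f z + (starRingEnd ℂ) (f z)) * (starRingEnd ℂ) (g z)) with hP2
  set Q1 : ℂ → ℂ := fun z => 2*(z.im:ℂ) * (starRingEnd ℂ) (g z)
    + φ z * (starRingEnd ℂ) (deriv g z * I) with hQ1
  set Q2 : ℂ → ℂ := fun z => -((f z * I + (starRingEnd ℂ) (f z * I)) * (starRingEnd ℂ) (g z))
    with hQ2
  -- integrability
  have hBint : IntegrableOn (fun z => 2 * (‖z‖ * ‖g z‖) + 2 * ‖T z‖) Ω := by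
    apply Integrable.add
    · apply IntegrableOn.mono_set _ (subset_closure : Ω ⊆ closure Ω)
      apply ContinuousOn.integrableOn_compact hK
      exact (continuous_const.continuousOn).mul
        ((continuous_norm.continuousOn).mul (continuous_norm.comp_continuousOn (hgc.mono hUsub)))
    · exact (hTi.norm).const_mul 2
  have hbound : ∀ z : ℂ, ‖f z‖ * ‖g z‖ ≤ ‖z‖ * ‖g z‖ + ‖T z‖ := by
    intro z
    have hid : f z * (starRingEnd ℂ) (g z) = (starRingEnd ℂ) z * (starRingEnd ℂ) (g z) - T z := by
      rw [hTdef]; ring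
    calc ‖f z‖ * ‖g z‖ = ‖f z * (starRingEnd ℂ) (g z)‖ := by
          rw [norm_mul, RCLike.norm_conj]
      _ = ‖(starRingEnd ℂ) z * (starRingEnd ℂ) (g z) - T z‖ := by rw [hid]
      _ ≤ ‖(starRingEnd ℂ) z * (starRingEnd ℂ) (g z)‖ + ‖T z‖ := norm_sub_le _ _
      _ = ‖z‖ * ‖g z‖ + ‖T z‖ := by rw [norm_mul, RCLike.norm_conj, RCLike.norm_conj]
  have hP2int : IntegrableOn P2 Ω := by
    apply Integrable.mono' hBint
    · exact ((aesm_f.add (continuous_star.comp_aestronglyMeasurable aesm_f)).mul aesm_g).neg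
    · refine Filter.Eventually.of_forall fun z => ?_
      rw [hP2]
      dsimp only
      rw [norm_neg, norm_mul, RCLike.norm_conj]
      calc ‖f z + (starRingEnd ℂ) (f z)‖ * ‖g z‖ ≤ (‖f z‖ + ‖f z‖) * ‖g z‖ := by
            apply mul_le_mul_of_nonneg_right _ (norm_nonneg _)
            refine le_trans (norm_add_le _ _) ?_
            rw [RCLike.norm_conj]
        _ = 2 * (‖f z‖ * ‖g z‖) := by ring
        _ ≤ 2 * (‖z‖ * ‖g z‖ + ‖T z‖) := by
            apply mul_le_mul_of_nonneg_left (hbound z) (by norm_num)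
        _ = 2 * (‖z‖ * ‖g z‖) + 2 * ‖T z‖ := by ring
  have hQ2int : IntegrableOn Q2 Ω := by
    apply Integrable.mono' hBint
    · exact (((aesm_f.mul aestronglyMeasurable_const).add
        (continuous_star.comp_aestronglyMeasurable (aesm_f.mul aestronglyMeasurable_const))).mul aesm_g).neg
    · refine Filter.Eventually.of_forall fun z => ?_
      rw [hQ2]
      dsimp only
      rw [norm_neg, norm_mul, RCLike.norm_conj]
      calc ‖f z * I + (starRingEnd ℂ) (f z * I)‖ * ‖g z‖ ≤ (‖f z * I‖ + ‖f z * I‖) * ‖g z‖ := by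
            apply mul_le_mul_of_nonneg_right _ (norm_nonneg _)
            refine le_trans (norm_add_le _ _) ?_
            rw [RCLike.norm_conj]
        _ = 2 * (‖f z‖ * ‖g z‖) := by rw [norm_mul, Complex.norm_I, mul_one]; ring
        _ ≤ 2 * (‖z‖ * ‖g z‖ + ‖T z‖) := by
            apply mul_le_mul_of_nonneg_left (hbound z) (by norm_num)
        _ = 2 * (‖z‖ * ‖g z‖) + 2 * ‖T z‖ := by ring
  have hP1int : IntegrableOn P1 Ω := by
    apply hcont_int
    apply ContinuousOn.add
    · apply ContinuousOn.mul _ hgcclos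
      exact (continuous_const.mul (Complex.continuous_ofReal.comp Complex.continuous_re)).continuousOn
    · exact hφc.mul hg'cclos
  have hQ1int : IntegrableOn Q1 Ω := by
    apply hcont_int
    apply ContinuousOn.add
    · apply ContinuousOn.mul _ hgcclos
      exact (continuous_const.mul (Complex.continuous_ofReal.comp Complex.continuous_im)).continuousOn
    · exact hφc.mul (continuous_star.comp_continuousOn ((hg'c.mono hUsub).mul continuousOn_const))
  have hxint : IntegrableOn (fun z => P1 z + P2 z) Ω := hP1int.add hP2int
  have hyint : IntegrableOn (fun z => Q1 z + Q2 z) Ω := hQ1int.add hQ2int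
  -- derivative in the x direction
  have hdx : ∀ z ∈ Ω, HasDerivAt (fun x : ℝ => ψ (↑x + ↑z.im * I)) (P1 z + P2 z) z.re := by
    intro z hz
    have hzz : (↑z.re + ↑z.im * I) = z := Complex.re_add_im z
    have h_nsq : HasDerivAt (fun x : ℝ => ((normSq (↑x + ↑z.im * I) : ℝ) : ℂ))
        (2 * (z.re : ℂ)) z.re := by
      have hr : HasDerivAt (fun x : ℝ => x ^ 2 + z.im ^ 2) (2 * z.re) z.re := by
        simpa using (hasDerivAt_pow 2 z.re).add_const (z.im ^ 2)
      have := hr.ofReal_comp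
      have heq : (fun x : ℝ => ((x ^ 2 + z.im ^ 2 : ℝ) : ℂ))
          = fun x : ℝ => ((normSq (↑x + ↑z.im * I) : ℝ) : ℂ) := by
        funext x
        rw [Complex.normSq_add_mul_I]
      rw [heq] at this
      convert this using 1
      push_cast
      ring
    have hcurve : HasDerivAt (fun w : ℂ => w + ↑z.im * I) 1 (↑z.re : ℂ) :=
      (hasDerivAt_id _).add_const _
    have h_F : HasDerivAt (fun x : ℝ => F (↑x + ↑z.im * I)) (f z) z.re := by
      have hFz : HasDerivAt F (f z) ((fun w : ℂ => w + ↑z.im * I) ↑z.re) := by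
        simpa [hzz] using hf z hz
      have := (HasDerivAt.comp (↑z.re : ℂ) hFz hcurve).comp_ofReal
      simpa using this
    have h_g : HasDerivAt (fun x : ℝ => g (↑x + ↑z.im * I)) (deriv g z) z.re := by
      have hgz : HasDerivAt g (deriv g z) ((fun w : ℂ => w + ↑z.im * I) ↑z.re) := by
        simpa [hzz] using hgdiff z hz
      have := (HasDerivAt.comp (↑z.re : ℂ) hgz hcurve).comp_ofReal
      simpa using this
    have h_φ : HasDerivAt (fun x : ℝ => φ (↑x + ↑z.im * I))
        (2 * (z.re : ℂ) - f z - (starRingEnd ℂ) (f z)) z.re :=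
      (h_nsq.sub h_F).sub (hasDerivAt_conj_comp h_F)
    have h_total := h_φ.mul (hasDerivAt_conj_comp h_g)
    rw [hzz] at h_total
    refine h_total.congr_deriv ?_
    rw [hP1, hP2]
    dsimp only
    ring
  -- derivative in the y direction
  have hdy : ∀ z ∈ Ω, HasDerivAt (fun y : ℝ => ψ (↑z.re + ↑y * I)) (Q1 z + Q2 z) z.im := by
    intro z hz
    have hzz : (↑z.re + ↑z.im * I) = z := Complex.re_add_im z
    have h_nsq : HasDerivAt (fun y : ℝ => ((normSq (↑z.re + ↑y * I) : ℝ) : ℂ))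
        (2 * (z.im : ℂ)) z.im := by
      have hr : HasDerivAt (fun y : ℝ => z.re ^ 2 + y ^ 2) (2 * z.im) z.im := by
        simpa using ((hasDerivAt_pow 2 z.im).const_add (z.re ^ 2))
      have := hr.ofReal_comp
      have heq : (fun y : ℝ => ((z.re ^ 2 + y ^ 2 : ℝ) : ℂ))
          = fun y : ℝ => ((normSq (↑z.re + ↑y * I) : ℝ) : ℂ) := by
        funext y
        rw [Complex.normSq_add_mul_I]
      rw [heq] at this
      convert this using 1
      push_cast
      ring
    have hcurve : HasDerivAt (fun w : ℂ => ↑z.re + w * I) I (↑z.im : ℂ) := by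
      simpa using ((hasDerivAt_id (↑z.im : ℂ)).mul_const I).const_add (↑z.re : ℂ)
    have h_F : HasDerivAt (fun y : ℝ => F (↑z.re + ↑y * I)) (f z * I) z.im := by
      have hFz : HasDerivAt F (f z) ((fun w : ℂ => ↑z.re + w * I) ↑z.im) := by
        simpa [hzz] using hf z hz
      have := (HasDerivAt.comp (↑z.im : ℂ) hFz hcurve).comp_ofReal
      simpa using this
    have h_g : HasDerivAt (fun y : ℝ => g (↑z.re + ↑y * I)) (deriv g z * I) z.im := by
      have hgz : HasDerivAt g (deriv g z) ((fun w : ℂ => ↑z.re + w * I) ↑z.im) := by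
        simpa [hzz] using hgdiff z hz
      have := (HasDerivAt.comp (↑z.im : ℂ) hgz hcurve).comp_ofReal
      simpa using this
    have h_φ : HasDerivAt (fun y : ℝ => φ (↑z.re + ↑y * I))
        (2 * (z.im : ℂ) - f z * I - (starRingEnd ℂ) (f z * I)) z.im :=
      (h_nsq.sub h_F).sub (hasDerivAt_conj_comp h_F)
    have h_total := h_φ.mul (hasDerivAt_conj_comp h_g)
    rw [hzz] at h_total
    refine h_total.congr_deriv ?_
    rw [hQ1, hQ2]
    dsimp only
    ring
  have hIx : ∫ z in Ω, (P1 z + P2 z) = 0 :=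
    cplx_setup Ω hΩopen hΩbdd ψ (fun z => P1 z + P2 z) hψc hψ0 hxint hdx
  have hIy : ∫ z in Ω, (Q1 z + Q2 z) = 0 :=
    cplx_setup_y Ω hΩopen hΩbdd ψ (fun z => Q1 z + Q2 z) hψc hψ0 hyint hdy
  have hcomb : ∀ z : ℂ, T z = (1/2 : ℂ) * (P1 z + P2 z) - (I/2) * (Q1 z + Q2 z) := by
    intro z
    have hcz : (starRingEnd ℂ) z = (z.re : ℂ) - (z.im : ℂ) * I := by
      conv_lhs => rw [← Complex.re_add_im z]
      rw [map_add, map_mul, Complex.conj_ofReal, Complex.conj_ofReal, Complex.conj_I]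
      ring
    rw [hTdef, hP1, hP2, hQ1, hQ2]
    dsimp only
    rw [hcz, map_mul, map_mul, Complex.conj_I]
    linear_combination (-(f z * (starRingEnd ℂ) (g z) - (starRingEnd ℂ) (f z) * (starRingEnd ℂ) (g z)
      + φ z * (starRingEnd ℂ) (deriv g z)) / 2) * Complex.I_mul_I
  calc ∫ z in Ω, T z = ∫ z in Ω, ((1/2 : ℂ) * (P1 z + P2 z) - (I/2) * (Q1 z + Q2 z)) :=
        integral_congr_ae (Filter.Eventually.of_forall fun z => hcomb z)
    _ = (1/2 : ℂ) * (∫ z in Ω, (P1 z + P2 z)) - (I/2) * (∫ z in Ω, (Q1 z + Q2 z)) := by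
        rw [integral_sub (hxint.const_mul _) (hyint.const_mul _),
          integral_const_mul, integral_const_mul]
    _ = 0 := by rw [hIx, hIy]; ring
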